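/- Let f₁,…,fₙ: ℝ → ℝ be increasing functions. Then the set D₁ = { x ∈ ℝⁿ : ∃ a ∈ ℝ such that a ∈ [fᵢ(xᵢ⁻), fᵢ(xᵢ⁺)] for all i } is a closed subset of ℝⁿ. -/
import Mathlib


open Filter Topology Function

theorem filippov_consensus_set_isClosed (n : ℕ) (f : Fin n → ℝ → ℝ)
    (hf : ∀ i, Monotone (f i)) :
    IsClosed {x : Fin n → ℝ | ∃ a : ℝ, ∀ i,
      a ∈ Set.Icc (leftLim (f i) (x i)) (rightLim (f i) (x i))} := by
  have hset : {x : Fin n → ℝ | ∃ a : ℝ, ∀ i,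
      a ∈ Set.Icc (leftLim (f i) (x i)) (rightLim (f i) (x i))}
      = ⋂ i, ⋂ j, {x : Fin n → ℝ | leftLim (f i) (x i) ≤ rightLim (f j) (x j)} := by
    ext x
    simp only [Set.mem_setOf_eq, Set.mem_iInter, Set.mem_Icc]
    constructor
    · rintro ⟨a, ha⟩ i j
      exact (ha i).1.trans (ha j).2
    · intro h
      rcases isEmpty_or_nonempty (Fin n) with hn | hn
      · exact ⟨0, fun i => (IsEmpty.false i).elim⟩
      · refine ⟨(Finset.univ : Finset (Fin n)).sup' Finset.univ_nonempty
          (fun k => leftLim (f k) (x k)), fun j => ?_⟩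
        constructor
        · exact Finset.le_sup' (fun k => leftLim (f k) (x k)) (Finset.mem_univ j)
        · exact Finset.sup'_le Finset.univ_nonempty (fun k => leftLim (f k) (x k))
            fun i _ => h i j
  rw [hset]
  refine isClosed_iInter fun i => isClosed_iInter fun j => ?_
  rw [← isOpen_compl_iff]
  rw [isOpen_iff_mem_nhds]
  intro x hx
  simp only [Set.mem_compl_iff, Set.mem_setOf_eq, not_le] at hx
  -- hx : rightLim (f j) (x j) < leftLim (f i) (x i)
  obtain ⟨t, ht, htx⟩ := (((hf i).tendsto_leftLim (x i)).eventually
    (eventually_gt_nhds hx)).and eventually_mem_nhdsWithin |>.exists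
  -- ht : rightLim (f j) (x j) < f i t, htx : t < x i
  obtain ⟨s, hs, hsx⟩ := (((hf j).tendsto_rightLim (x j)).eventually
    (eventually_lt_nhds ht)).and eventually_mem_nhdsWithin |>.exists
  -- hs : f j s < f i t, hsx : x j < s
  have hopen : IsOpen ((fun y : Fin n → ℝ => y i) ⁻¹' Set.Ioi t ∩
      (fun y : Fin n → ℝ => y j) ⁻¹' Set.Iio s) :=
    ((isOpen_Ioi).preimage (continuous_apply i)).inter
      ((isOpen_Iio).preimage (continuous_apply j))
  refine Filter.mem_of_superset (hopen.mem_nhds ⟨htx, hsx⟩) ?_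
  rintro y ⟨hyi, hyj⟩
  simp only [Set.mem_compl_iff, Set.mem_setOf_eq, not_le]
  calc rightLim (f j) (y j) ≤ f j s := (hf j).rightLim_le hyj
    _ < f i t := hs
    _ ≤ leftLim (f i) (y i) := (hf i).le_leftLim hyi
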